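/- Let S be a real symmetric n×n matrix that is positive semidefinite and such that I − S is positive definite. Then, in the Loewner order, −½S² ⪯ √(I − S) − I + ½S ⪯ 0; equivalently, 0 ⪯ I − ½S − √(I − S) ⪯ ½S². -/

import Mathlib

open Matrix

open scoped ComplexOrder in
/-- The positive semidefinite square root of a positive semidefinite matrix
(the definition of `Matrix.PosSemidef.sqrt` in the older Mathlib, removed since). -/
noncomputable def Matrix.PosSemidef.sqrt {n : Type*} [Fintype n] [DecidableEq n] {𝕜 : Type*}
    [RCLike 𝕜] {A : Matrix n n 𝕜} (hA : PosSemidef A) : Matrix n n 𝕜 :=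
  hA.1.eigenvectorUnitary.1 * diagonal ((↑) ∘ (√·) ∘ hA.1.eigenvalues) *
  (star hA.1.eigenvectorUnitary : Matrix n n 𝕜)

lemma my_sqrt_psd {m : ℕ} {A : Matrix (Fin m) (Fin m) ℝ} (hA : A.PosSemidef) :
    (PosSemidef.sqrt hA).PosSemidef := by
  unfold PosSemidef.sqrt
  have hD : (diagonal ((↑) ∘ (√·) ∘ hA.1.eigenvalues) : Matrix (Fin m) (Fin m) ℝ).PosSemidef := by
    rw [posSemidef_diagonal_iff]; intro i; simp [Real.sqrt_nonneg]
  have := hD.mul_mul_conjTranspose_same hA.1.eigenvectorUnitary.1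
  exact this

lemma my_sqrt_mul_self {m : ℕ} {A : Matrix (Fin m) (Fin m) ℝ} (hA : A.PosSemidef) :
    PosSemidef.sqrt hA * PosSemidef.sqrt hA = A := by
  unfold PosSemidef.sqrt
  have hU : (star hA.1.eigenvectorUnitary : Matrix (Fin m) (Fin m) ℝ) * hA.1.eigenvectorUnitary.1 = 1 :=
    Unitary.coe_star_mul_self _
  conv_rhs => rw [hA.1.spectral_theorem, Unitary.conjStarAlgAut_apply]
  simp only [mul_assoc]
  rw [← mul_assoc (star _ : Matrix _ _ ℝ), hU, one_mul, ← mul_assoc (diagonal _),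
    diagonal_mul_diagonal]
  congr 3
  funext i
  simp [Real.mul_self_sqrt (hA.eigenvalues_nonneg i)]

lemma psd_smul_aux {n : ℕ} {A : Matrix (Fin n) (Fin n) ℝ} (hA : A.PosSemidef)
    {c : ℝ} (hc : 0 ≤ c) : (c • A).PosSemidef := by
  exact hA.smul hc

/-- Let `S` be a real symmetric positive semidefinite `n × n` matrix
such that `I - S` is positive definite.  Then, in the Loewner order,
`-½ S² ⪯ √(I - S) - I + ½ S ⪯ 0`; equivalently `0 ⪯ I - ½ S - √(I - S) ⪯ ½ S²`.
Here the square root is the unique positive (semi)definite square root, and `A ⪯ B`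
means that `B - A` is positive semidefinite. -/
theorem stmt7 {n : ℕ} (S : Matrix (Fin n) (Fin n) ℝ)
    (hS : Sᵀ = S) (hpsd : S.PosSemidef) (hpd : (1 - S).PosDef) :
    ((PosSemidef.sqrt hpd.posSemidef - 1 + (1 / 2 : ℝ) • S) - (-((1 / 2 : ℝ) • (S * S)))).PosSemidef ∧
      (0 - (PosSemidef.sqrt hpd.posSemidef - 1 + (1 / 2 : ℝ) • S)).PosSemidef := by
  set X := PosSemidef.sqrt hpd.posSemidef with hX
  have hXpsd : X.PosSemidef := my_sqrt_psd hpd.posSemidef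
  have hXh : Xᴴ = X := hXpsd.isHermitian
  have hXX : X * X = 1 - S := my_sqrt_mul_self hpd.posSemidef
  have hSX : S = 1 - X * X := by rw [hXX]; abel
  constructor
  · have key : (X - 1 + (1 / 2 : ℝ) • S) - (-((1 / 2 : ℝ) • (S * S)))
        = (1 / 2 : ℝ) • ((X - 1)ᴴ * (X * X + (X + X)) * (X - 1)) := by
      rw [conjTranspose_sub, hXh, conjTranspose_one, hSX]
      noncomm_ring
      module
    rw [key]
    have h1 : (X * X + (X + X)).PosSemidef := by
      have := (posSemidef_conjTranspose_mul_self X)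
      rw [hXh] at this
      exact this.add (hXpsd.add hXpsd)
    exact psd_smul_aux (h1.conjTranspose_mul_mul_same (X - 1)) (by norm_num)
  · have key : 0 - (X - 1 + (1 / 2 : ℝ) • S) = (1 / 2 : ℝ) • ((X - 1)ᴴ * (X - 1)) := by
      rw [conjTranspose_sub, hXh, conjTranspose_one, hSX]
      noncomm_ring
      module
    rw [key]
    exact psd_smul_aux (posSemidef_conjTranspose_mul_self (X - 1)) (by norm_num)
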